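/- Let A be a real symmetric positive definite n×n matrix, C a real symmetric positive definite m×m matrix, and B a real n×m matrix, and let 𝒜 := [[A, B], [Bᵀ, −C]] be the associated (n+m)×(n+m) symmetric saddle point matrix. Define the negative Schur complements S := C + Bᵀ A⁻¹ B and R := A + B C⁻¹ Bᵀ, and the block-diagonal preconditioners P₀ := diag(A, S) and P₁ := diag(R, C). Then for j ∈ {0,1} and all u ∈ ℝ^{n+m}: ((√5 − 1)/2) ‖u‖_{P_j} ≤ ‖𝒜u‖_{P_j⁻¹} ≤ ((√5 + 1)/2) ‖u‖_{P_j}, where ‖v‖_M := √(vᵀMv) for a symmetric positive definite matrix M. -/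

import Mathlib

open Matrix
section Helpers
set_option linter.unusedSectionVars false
variable {ι : Type*} {κ : Type*} [Fintype ι] [Fintype κ] [DecidableEq ι] [DecidableEq κ]

lemma dot_tr (M : Matrix ι κ ℝ) (x : ι → ℝ) (y : κ → ℝ) :
    x ⬝ᵥ (M *ᵥ y) = y ⬝ᵥ (Mᵀ *ᵥ x) := by
  rw [dotProduct_mulVec, mulVec_transpose, dotProduct_comm]

lemma dot_sym {M : Matrix ι ι ℝ} (hM : Mᵀ = M) (x y : ι → ℝ) :
    x ⬝ᵥ (M *ᵥ y) = y ⬝ᵥ (M *ᵥ x) := by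
  rw [dot_tr, hM]

lemma tr_eq {M : Matrix ι ι ℝ} (hM : M.PosDef) : Mᵀ = M := by
  rw [← conjTranspose_eq_transpose_of_trivial]; exact hM.isHermitian

lemma qf_nonneg {M : Matrix ι ι ℝ} (hM : M.PosSemidef) (x : ι → ℝ) :
    0 ≤ x ⬝ᵥ (M *ᵥ x) := by simpa using hM.dotProduct_mulVec_nonneg x

lemma inv_cancel {M : Matrix ι ι ℝ} (hM : M.PosDef) (x : ι → ℝ) :
    M⁻¹ *ᵥ (M *ᵥ x) = x := by
  rw [mulVec_mulVec, nonsing_inv_mul M (isUnit_iff_ne_zero.2 hM.det_pos.ne'), one_mulVec]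

lemma cancel_inv {M : Matrix ι ι ℝ} (hM : M.PosDef) (x : ι → ℝ) :
    M *ᵥ (M⁻¹ *ᵥ x) = x := by
  rw [mulVec_mulVec, mul_nonsing_inv M (isUnit_iff_ne_zero.2 hM.det_pos.ne'), one_mulVec]

lemma sandwich_psd {M : Matrix ι ι ℝ} (hM : M.PosSemidef) (B : Matrix ι κ ℝ) :
    (Bᵀ * M * B).PosSemidef := by
  have := hM.conjTranspose_mul_mul_same B
  rwa [conjTranspose_eq_transpose_of_trivial] at this

lemma CS2 {A : Matrix ι ι ℝ} {S : Matrix κ κ ℝ} (hA : A.PosSemidef) (hS : S.PosSemidef)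
    (a h : ι → ℝ) (b k : κ → ℝ) :
    (a ⬝ᵥ (A *ᵥ h) + b ⬝ᵥ (S *ᵥ k))^2
      ≤ (a ⬝ᵥ (A *ᵥ a) + b ⬝ᵥ (S *ᵥ b)) * (h ⬝ᵥ (A *ᵥ h) + k ⬝ᵥ (S *ᵥ k)) := by
  have hAs : Aᵀ = A := by rw [← conjTranspose_eq_transpose_of_trivial]; exact hA.1
  have hSs : Sᵀ = S := by rw [← conjTranspose_eq_transpose_of_trivial]; exact hS.1
  have key : ∀ t : ℝ, 0 ≤ (h ⬝ᵥ (A *ᵥ h) + k ⬝ᵥ (S *ᵥ k)) * (t * t)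
      + (-2 * (a ⬝ᵥ (A *ᵥ h) + b ⬝ᵥ (S *ᵥ k))) * t
      + (a ⬝ᵥ (A *ᵥ a) + b ⬝ᵥ (S *ᵥ b)) := by
    intro t
    have h1 : 0 ≤ (a - t • h) ⬝ᵥ (A *ᵥ (a - t • h)) := qf_nonneg hA _
    have h2 : 0 ≤ (b - t • k) ⬝ᵥ (S *ᵥ (b - t • k)) := qf_nonneg hS _
    have s1 : h ⬝ᵥ (A *ᵥ a) = a ⬝ᵥ (A *ᵥ h) := dot_sym hAs h a
    have s2 : k ⬝ᵥ (S *ᵥ b) = b ⬝ᵥ (S *ᵥ k) := dot_sym hSs k b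
    simp only [mulVec_sub, mulVec_smul, dotProduct_sub, sub_dotProduct, dotProduct_smul,
      smul_dotProduct, smul_eq_mul] at h1 h2
    rw [s1] at h1
    rw [s2] at h2
    nlinarith [h1, h2]
  have hd := discrim_le_zero key
  rw [discrim] at hd
  nlinarith [hd]

lemma endgame {q0 q2 q4 : ℝ} (h0 : 0 ≤ q0) (h2 : 0 ≤ q2)
    (hCS : q2^2 ≤ q0 * q4) (hKI : q0 + q4 ≤ 3*q2) :
    (Real.sqrt 5 - 1)/2 * Real.sqrt q0 ≤ Real.sqrt q2 ∧
      Real.sqrt q2 ≤ (Real.sqrt 5 + 1)/2 * Real.sqrt q0 := by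
  have hs : Real.sqrt 5 ^ 2 = 5 := Real.sq_sqrt (by norm_num)
  set s := Real.sqrt 5 with hsdef
  have hs0 : 0 ≤ s := Real.sqrt_nonneg 5
  have hs2 : 2 ≤ s := by nlinarith
  have hs3 : s ≤ 3 := by nlinarith
  have hquad : q2^2 - 3*q0*q2 + q0^2 ≤ 0 := by nlinarith [mul_le_mul_of_nonneg_left hKI h0]
  have hsq : (2*q2 - 3*q0)^2 ≤ (s*q0)^2 := by nlinarith
  have hsq0 : 0 ≤ s * q0 := mul_nonneg hs0 h0
  have hhi : q2 ≤ (3 + s)/2 * q0 := by nlinarith [hsq, hsq0]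
  have hlo : (3 - s)/2 * q0 ≤ q2 := by nlinarith [hsq, hsq0]
  constructor
  · have h1 : ((s-1)/2)^2 * q0 ≤ q2 := by nlinarith
    calc (s-1)/2 * Real.sqrt q0 = Real.sqrt (((s-1)/2)^2 * q0) := by
          rw [Real.sqrt_mul (sq_nonneg _), Real.sqrt_sq (by linarith : (0:ℝ) ≤ (s-1)/2)]
      _ ≤ Real.sqrt q2 := Real.sqrt_le_sqrt h1
  · have h1 : q2 ≤ ((s+1)/2)^2 * q0 := by nlinarith
    calc Real.sqrt q2 ≤ Real.sqrt (((s+1)/2)^2 * q0) := Real.sqrt_le_sqrt h1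
      _ = (s+1)/2 * Real.sqrt q0 := by
          rw [Real.sqrt_mul (sq_nonneg _), Real.sqrt_sq (by linarith : (0:ℝ) ≤ (s+1)/2)]
lemma mvdot (M : Matrix ι κ ℝ) (x : κ → ℝ) (y : ι → ℝ) :
    (M *ᵥ x) ⬝ᵥ y = y ⬝ᵥ (M *ᵥ x) := dotProduct_comm _ _

set_option maxHeartbeats 1000000 in
lemma KI (A : Matrix ι ι ℝ) (B : Matrix ι κ ℝ) (C : Matrix κ κ ℝ)
    (hAs : Aᵀ = A) (hCs : Cᵀ = C)
    (hApsd : A.PosSemidef) (hCpsd : C.PosSemidef)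
    (a p m f e nv : ι → ℝ) (b q k s : κ → ℝ)
    (R1 : A *ᵥ p = A *ᵥ a + B *ᵥ b)
    (R2 : C *ᵥ q + Bᵀ *ᵥ m = Bᵀ *ᵥ a - C *ᵥ b)
    (R3 : A *ᵥ m = B *ᵥ q)
    (R4 : C *ᵥ k + Bᵀ *ᵥ f = Bᵀ *ᵥ p - C *ᵥ q)
    (R5 : A *ᵥ f = B *ᵥ k)
    (R6 : C *ᵥ s + Bᵀ *ᵥ e = Bᵀ *ᵥ (p + m))
    (R7 : A *ᵥ e = B *ᵥ s)
    (R8 : A *ᵥ nv = B *ᵥ b) :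
    (a ⬝ᵥ (A *ᵥ a) + b ⬝ᵥ (C *ᵥ b) + b ⬝ᵥ (Bᵀ *ᵥ nv))
      + ((A *ᵥ a + B *ᵥ b + B *ᵥ q) ⬝ᵥ (p + m) + (Bᵀ *ᵥ p - C *ᵥ q) ⬝ᵥ k)
      ≤ 3 * ((A *ᵥ a + B *ᵥ b) ⬝ᵥ p + (Bᵀ *ᵥ a - C *ᵥ b) ⬝ᵥ q) := by
  have hbt : ∀ (x : κ → ℝ) (y : ι → ℝ), x ⬝ᵥ (Bᵀ *ᵥ y) = y ⬝ᵥ (B *ᵥ x) := by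
    intro x y; rw [dot_tr Bᵀ x y, transpose_transpose]
  have N1 : 0 ≤ (p + m - e) ⬝ᵥ (A *ᵥ (p + m - e)) := qf_nonneg hApsd _
  have N2 : 0 ≤ s ⬝ᵥ (C *ᵥ s) := qf_nonneg hCpsd _
  have N3 : 0 ≤ b ⬝ᵥ (C *ᵥ b) := qf_nonneg hCpsd _
  have hR1a := congrArg (fun v => a ⬝ᵥ v) R1
  have hR1p := congrArg (fun v => p ⬝ᵥ v) R1
  have hR1m := congrArg (fun v => m ⬝ᵥ v) R1
  have hR1f := congrArg (fun v => f ⬝ᵥ v) R1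
  have hR1e := congrArg (fun v => e ⬝ᵥ v) R1
  have hR1nv := congrArg (fun v => nv ⬝ᵥ v) R1
  have hR3a := congrArg (fun v => a ⬝ᵥ v) R3
  have hR3p := congrArg (fun v => p ⬝ᵥ v) R3
  have hR3m := congrArg (fun v => m ⬝ᵥ v) R3
  have hR3f := congrArg (fun v => f ⬝ᵥ v) R3
  have hR3e := congrArg (fun v => e ⬝ᵥ v) R3
  have hR3nv := congrArg (fun v => nv ⬝ᵥ v) R3
  have hR5a := congrArg (fun v => a ⬝ᵥ v) R5
  have hR5p := congrArg (fun v => p ⬝ᵥ v) R5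
  have hR5m := congrArg (fun v => m ⬝ᵥ v) R5
  have hR5f := congrArg (fun v => f ⬝ᵥ v) R5
  have hR5e := congrArg (fun v => e ⬝ᵥ v) R5
  have hR5nv := congrArg (fun v => nv ⬝ᵥ v) R5
  have hR7a := congrArg (fun v => a ⬝ᵥ v) R7
  have hR7p := congrArg (fun v => p ⬝ᵥ v) R7
  have hR7m := congrArg (fun v => m ⬝ᵥ v) R7
  have hR7f := congrArg (fun v => f ⬝ᵥ v) R7
  have hR7e := congrArg (fun v => e ⬝ᵥ v) R7
  have hR7nv := congrArg (fun v => nv ⬝ᵥ v) R7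
  have hR8a := congrArg (fun v => a ⬝ᵥ v) R8
  have hR8p := congrArg (fun v => p ⬝ᵥ v) R8
  have hR8m := congrArg (fun v => m ⬝ᵥ v) R8
  have hR8f := congrArg (fun v => f ⬝ᵥ v) R8
  have hR8e := congrArg (fun v => e ⬝ᵥ v) R8
  have hR8nv := congrArg (fun v => nv ⬝ᵥ v) R8
  have hR2b := congrArg (fun v => b ⬝ᵥ v) R2
  have hR2q := congrArg (fun v => q ⬝ᵥ v) R2
  have hR2k := congrArg (fun v => k ⬝ᵥ v) R2
  have hR2s := congrArg (fun v => s ⬝ᵥ v) R2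
  have hR4b := congrArg (fun v => b ⬝ᵥ v) R4
  have hR4q := congrArg (fun v => q ⬝ᵥ v) R4
  have hR4k := congrArg (fun v => k ⬝ᵥ v) R4
  have hR4s := congrArg (fun v => s ⬝ᵥ v) R4
  have hR6b := congrArg (fun v => b ⬝ᵥ v) R6
  have hR6q := congrArg (fun v => q ⬝ᵥ v) R6
  have hR6k := congrArg (fun v => k ⬝ᵥ v) R6
  have hR6s := congrArg (fun v => s ⬝ᵥ v) R6
  have sAap : a ⬝ᵥ (A *ᵥ p) = p ⬝ᵥ (A *ᵥ a) := dot_sym hAs a p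
  have sAam : a ⬝ᵥ (A *ᵥ m) = m ⬝ᵥ (A *ᵥ a) := dot_sym hAs a m
  have sAaf : a ⬝ᵥ (A *ᵥ f) = f ⬝ᵥ (A *ᵥ a) := dot_sym hAs a f
  have sAae : a ⬝ᵥ (A *ᵥ e) = e ⬝ᵥ (A *ᵥ a) := dot_sym hAs a e
  have sAanv : a ⬝ᵥ (A *ᵥ nv) = nv ⬝ᵥ (A *ᵥ a) := dot_sym hAs a nv
  have sApm : p ⬝ᵥ (A *ᵥ m) = m ⬝ᵥ (A *ᵥ p) := dot_sym hAs p m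
  have sApf : p ⬝ᵥ (A *ᵥ f) = f ⬝ᵥ (A *ᵥ p) := dot_sym hAs p f
  have sApe : p ⬝ᵥ (A *ᵥ e) = e ⬝ᵥ (A *ᵥ p) := dot_sym hAs p e
  have sApnv : p ⬝ᵥ (A *ᵥ nv) = nv ⬝ᵥ (A *ᵥ p) := dot_sym hAs p nv
  have sAmf : m ⬝ᵥ (A *ᵥ f) = f ⬝ᵥ (A *ᵥ m) := dot_sym hAs m f
  have sAme : m ⬝ᵥ (A *ᵥ e) = e ⬝ᵥ (A *ᵥ m) := dot_sym hAs m e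
  have sAmnv : m ⬝ᵥ (A *ᵥ nv) = nv ⬝ᵥ (A *ᵥ m) := dot_sym hAs m nv
  have sAfe : f ⬝ᵥ (A *ᵥ e) = e ⬝ᵥ (A *ᵥ f) := dot_sym hAs f e
  have sAfnv : f ⬝ᵥ (A *ᵥ nv) = nv ⬝ᵥ (A *ᵥ f) := dot_sym hAs f nv
  have sAenv : e ⬝ᵥ (A *ᵥ nv) = nv ⬝ᵥ (A *ᵥ e) := dot_sym hAs e nv
  have sCbq : b ⬝ᵥ (C *ᵥ q) = q ⬝ᵥ (C *ᵥ b) := dot_sym hCs b q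
  have sCbk : b ⬝ᵥ (C *ᵥ k) = k ⬝ᵥ (C *ᵥ b) := dot_sym hCs b k
  have sCbs : b ⬝ᵥ (C *ᵥ s) = s ⬝ᵥ (C *ᵥ b) := dot_sym hCs b s
  have sCqk : q ⬝ᵥ (C *ᵥ k) = k ⬝ᵥ (C *ᵥ q) := dot_sym hCs q k
  have sCqs : q ⬝ᵥ (C *ᵥ s) = s ⬝ᵥ (C *ᵥ q) := dot_sym hCs q s
  have sCks : k ⬝ᵥ (C *ᵥ s) = s ⬝ᵥ (C *ᵥ k) := dot_sym hCs k s
  simp only [mulVec_add, mulVec_sub, dotProduct_add, dotProduct_sub, add_dotProduct,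
    sub_dotProduct, hbt, mvdot] at hR1a hR1p hR1m hR1f hR1e hR1nv hR3a hR3p hR3m hR3f hR3e hR3nv hR5a hR5p hR5m hR5f hR5e hR5nv hR7a hR7p hR7m hR7f hR7e hR7nv hR8a hR8p hR8m hR8f hR8e hR8nv hR2b hR2q hR2k hR2s hR4b hR4q hR4k hR4s hR6b hR6q hR6k hR6s sAap sAam sAaf sAae sAanv sApm sApf sApe sApnv sAmf sAme sAmnv sAfe sAfnv sAenv sCbq sCbk sCbs sCqk sCqs sCks N1 N2 N3 ⊢
  linarith


set_option maxHeartbeats 1000000 in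
lemma core (A : Matrix ι ι ℝ) (C : Matrix κ κ ℝ) (B : Matrix ι κ ℝ)
    (hA : A.PosDef) (hC : C.PosDef) (a : ι → ℝ) (b : κ → ℝ) (q0 q2 : ℝ)
    (hq0 : q0 = a ⬝ᵥ (A *ᵥ a) + b ⬝ᵥ ((C + Bᵀ * A⁻¹ * B) *ᵥ b))
    (hq2 : q2 = (A *ᵥ a + B *ᵥ b) ⬝ᵥ (A⁻¹ *ᵥ (A *ᵥ a + B *ᵥ b))
        + (Bᵀ *ᵥ a - C *ᵥ b) ⬝ᵥ ((C + Bᵀ * A⁻¹ * B)⁻¹ *ᵥ (Bᵀ *ᵥ a - C *ᵥ b))) :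
    (Real.sqrt 5 - 1)/2 * Real.sqrt q0 ≤ Real.sqrt q2 ∧
      Real.sqrt q2 ≤ (Real.sqrt 5 + 1)/2 * Real.sqrt q0 := by
  set S := C + Bᵀ * A⁻¹ * B with hSdef
  have hS : S.PosDef := hC.add_posSemidef (sandwich_psd hA.inv.posSemidef B)
  have RS : ∀ x : κ → ℝ, S *ᵥ x = C *ᵥ x + Bᵀ *ᵥ (A⁻¹ *ᵥ (B *ᵥ x)) := by
    intro x
    rw [hSdef]
    simp only [Matrix.add_mulVec, ← mulVec_mulVec]
  set v1 := A *ᵥ a + B *ᵥ b with hv1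
  set v2 := Bᵀ *ᵥ a - C *ᵥ b with hv2
  set p := A⁻¹ *ᵥ v1 with hp
  set q := S⁻¹ *ᵥ v2 with hq
  set m := A⁻¹ *ᵥ (B *ᵥ q) with hm
  set g2 := Bᵀ *ᵥ p - C *ᵥ q with hg2
  set k := S⁻¹ *ᵥ g2 with hk
  set f := A⁻¹ *ᵥ (B *ᵥ k) with hf
  set s := S⁻¹ *ᵥ (Bᵀ *ᵥ (p + m)) with hs
  set e := A⁻¹ *ᵥ (B *ᵥ s) with he
  set nv := A⁻¹ *ᵥ (B *ᵥ b) with hnv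
  have R1 : A *ᵥ p = A *ᵥ a + B *ᵥ b := cancel_inv hA v1
  have R2 : C *ᵥ q + Bᵀ *ᵥ m = Bᵀ *ᵥ a - C *ᵥ b := by
    rw [hm, ← RS q, hq, cancel_inv hS]
  have R3 : A *ᵥ m = B *ᵥ q := cancel_inv hA _
  have R4 : C *ᵥ k + Bᵀ *ᵥ f = Bᵀ *ᵥ p - C *ᵥ q := by
    rw [hf, ← RS k, hk, cancel_inv hS]
  have R5 : A *ᵥ f = B *ᵥ k := cancel_inv hA _
  have R6 : C *ᵥ s + Bᵀ *ᵥ e = Bᵀ *ᵥ (p + m) := by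
    rw [he, ← RS s, hs, cancel_inv hS]
  have R7 : A *ᵥ e = B *ᵥ s := cancel_inv hA _
  have R8 : A *ᵥ nv = B *ᵥ b := cancel_inv hA _
  have hAm : A *ᵥ (p + m) = v1 + B *ᵥ q := by
    rw [mulVec_add, R3, R1, ← hv1]
  have hSk : S *ᵥ k = g2 := cancel_inv hS g2
  set q4 := (p + m) ⬝ᵥ (A *ᵥ (p + m)) + k ⬝ᵥ (S *ᵥ k) with hq4
  -- q2 in CS-pairing form
  have hbt : ∀ (x : κ → ℝ) (y : ι → ℝ), x ⬝ᵥ (Bᵀ *ᵥ y) = y ⬝ᵥ (B *ᵥ x) := by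
    intro x y; rw [dot_tr Bᵀ x y, transpose_transpose]
  have hq2' : q2 = v1 ⬝ᵥ p + v2 ⬝ᵥ q := by rw [hq2]
  have key1 : a ⬝ᵥ (A *ᵥ (p + m)) + b ⬝ᵥ (S *ᵥ k) = q2 := by
    rw [hAm, hSk, hq2', hv1, hv2, hg2]
    have t1 := congrArg (fun v => a ⬝ᵥ v) R1
    have s1 : b ⬝ᵥ (C *ᵥ q) = q ⬝ᵥ (C *ᵥ b) := dot_sym (tr_eq hC) b q
    have s2 : p ⬝ᵥ (A *ᵥ a) = a ⬝ᵥ (A *ᵥ p) := dot_sym (tr_eq hA) p a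
    simp only [mulVec_add, mulVec_sub, dotProduct_add, dotProduct_sub, add_dotProduct,
      sub_dotProduct, hbt, mvdot] at t1 s1 s2 ⊢
    linarith [t1, s1, s2]
  -- Cauchy-Schwarz
  have hCS : q2^2 ≤ q0 * q4 := by
    have := CS2 hA.posSemidef hS.posSemidef a (p + m) b k
    rw [key1, ← hq4] at this
    rw [hq0]
    exact this
  -- Key inequality
  have hKI : q0 + q4 ≤ 3 * q2 := by
    have hki := KI A B C (tr_eq hA) (tr_eq hC) hA.posSemidef hC.posSemidef
      a p m f e nv b q k s R1 R2 R3 R4 R5 R6 R7 R8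
    have c0 : q0 = a ⬝ᵥ (A *ᵥ a) + b ⬝ᵥ (C *ᵥ b) + b ⬝ᵥ (Bᵀ *ᵥ nv) := by
      rw [hq0, RS b, dotProduct_add, hnv, add_assoc]
    have c1 : (A *ᵥ a + B *ᵥ b + B *ᵥ q) ⬝ᵥ (p + m) = (p + m) ⬝ᵥ (A *ᵥ (p + m)) := by
      rw [hAm, hv1, dotProduct_comm]
    have c2 : (Bᵀ *ᵥ p - C *ᵥ q) ⬝ᵥ k = k ⬝ᵥ (S *ᵥ k) := by
      rw [hSk, hg2, dotProduct_comm]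
    rw [c1, c2, ← c0, ← hv1, ← hv2, ← hq2'] at hki
    linarith [hki]
  have h0 : 0 ≤ q0 := by
    rw [hq0]
    exact add_nonneg (qf_nonneg hA.posSemidef a) (qf_nonneg hS.posSemidef b)
  have h2 : 0 ≤ q2 := by
    rw [hq2', hp, hq]
    exact add_nonneg (qf_nonneg hA.inv.posSemidef v1) (qf_nonneg hS.inv.posSemidef v2)
  exact endgame h0 h2 hCS hKI

end Helpers

theorem stmt_15 (n m : ℕ)
    (A : Matrix (Fin n) (Fin n) ℝ) (C : Matrix (Fin m) (Fin m) ℝ)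
    (B : Matrix (Fin n) (Fin m) ℝ) (hA : A.PosDef) (hC : C.PosDef)
    (𝒜 : Matrix (Fin n ⊕ Fin m) (Fin n ⊕ Fin m) ℝ)
    (h𝒜 : 𝒜 = Matrix.fromBlocks A B Bᵀ (-C))
    (S : Matrix (Fin m) (Fin m) ℝ) (hS : S = C + Bᵀ * A⁻¹ * B)
    (R : Matrix (Fin n) (Fin n) ℝ) (hR : R = A + B * C⁻¹ * Bᵀ)
    (P₀ P₁ : Matrix (Fin n ⊕ Fin m) (Fin n ⊕ Fin m) ℝ)
    (hP₀ : P₀ = Matrix.fromBlocks A 0 0 S) (hP₁ : P₁ = Matrix.fromBlocks R 0 0 C) :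
    ∀ u : Fin n ⊕ Fin m → ℝ,
      ((Real.sqrt 5 - 1) / 2 * Real.sqrt (u ⬝ᵥ (P₀ *ᵥ u))
          ≤ Real.sqrt ((𝒜 *ᵥ u) ⬝ᵥ (P₀⁻¹ *ᵥ (𝒜 *ᵥ u))) ∧
        Real.sqrt ((𝒜 *ᵥ u) ⬝ᵥ (P₀⁻¹ *ᵥ (𝒜 *ᵥ u)))
          ≤ (Real.sqrt 5 + 1) / 2 * Real.sqrt (u ⬝ᵥ (P₀ *ᵥ u))) ∧
      ((Real.sqrt 5 - 1) / 2 * Real.sqrt (u ⬝ᵥ (P₁ *ᵥ u))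
          ≤ Real.sqrt ((𝒜 *ᵥ u) ⬝ᵥ (P₁⁻¹ *ᵥ (𝒜 *ᵥ u))) ∧
        Real.sqrt ((𝒜 *ᵥ u) ⬝ᵥ (P₁⁻¹ *ᵥ (𝒜 *ᵥ u)))
          ≤ (Real.sqrt 5 + 1) / 2 * Real.sqrt (u ⬝ᵥ (P₁ *ᵥ u))) := by
  intro u
  subst h𝒜 hS hR hP₀ hP₁
  set a := u ∘ Sum.inl with ha
  set b := u ∘ Sum.inr with hb
  have hu : u = Sum.elim a b := funext fun i => by cases i <;> rfl
  -- pos def facts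
  have hSpd : (C + Bᵀ * A⁻¹ * B).PosDef := hC.add_posSemidef (sandwich_psd hA.inv.posSemidef B)
  have hRpd : (A + B * C⁻¹ * Bᵀ).PosDef := by
    have := sandwich_psd hC.inv.posSemidef Bᵀ
    rw [transpose_transpose] at this
    exact hA.add_posSemidef this
  have dA : IsUnit A.det := isUnit_iff_ne_zero.2 hA.det_pos.ne'
  have dC : IsUnit C.det := isUnit_iff_ne_zero.2 hC.det_pos.ne'
  have dS : IsUnit (C + Bᵀ * A⁻¹ * B).det := isUnit_iff_ne_zero.2 hSpd.det_pos.ne'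
  have dR : IsUnit (A + B * C⁻¹ * Bᵀ).det := isUnit_iff_ne_zero.2 hRpd.det_pos.ne'
  have hP0inv : (fromBlocks A 0 0 (C + Bᵀ * A⁻¹ * B))⁻¹
      = fromBlocks A⁻¹ 0 0 (C + Bᵀ * A⁻¹ * B)⁻¹ := by
    apply inv_eq_left_inv
    rw [fromBlocks_multiply]
    simp only [Matrix.mul_zero, Matrix.zero_mul, add_zero, zero_add,
      nonsing_inv_mul _ dA, nonsing_inv_mul _ dS]
    exact fromBlocks_one
  have hP1inv : (fromBlocks (A + B * C⁻¹ * Bᵀ) 0 0 C)⁻¹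
      = fromBlocks (A + B * C⁻¹ * Bᵀ)⁻¹ 0 0 C⁻¹ := by
    apply inv_eq_left_inv
    rw [fromBlocks_multiply]
    simp only [Matrix.mul_zero, Matrix.zero_mul, add_zero, zero_add,
      nonsing_inv_mul _ dR, nonsing_inv_mul _ dC]
    exact fromBlocks_one
  -- mulVec computations
  have hAu : (fromBlocks A B Bᵀ (-C)) *ᵥ u = Sum.elim (A *ᵥ a + B *ᵥ b) (Bᵀ *ᵥ a - C *ᵥ b) := by
    rw [hu, fromBlocks_mulVec]
    simp only [Sum.elim_comp_inl, Sum.elim_comp_inr]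
    rw [neg_mulVec, ← sub_eq_add_neg]
  constructor
  · -- j = 0
    have e0 : u ⬝ᵥ ((fromBlocks A 0 0 (C + Bᵀ * A⁻¹ * B)) *ᵥ u)
        = a ⬝ᵥ (A *ᵥ a) + b ⬝ᵥ ((C + Bᵀ * A⁻¹ * B) *ᵥ b) := by
      rw [hu, fromBlocks_mulVec]
      simp only [Sum.elim_comp_inl, Sum.elim_comp_inr, sumElim_dotProduct_sumElim]
      simp [zero_mulVec]
    have e2 : ((fromBlocks A B Bᵀ (-C)) *ᵥ u) ⬝ᵥ ((fromBlocks A 0 0 (C + Bᵀ * A⁻¹ * B))⁻¹ *ᵥ ((fromBlocks A B Bᵀ (-C)) *ᵥ u))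
        = (A *ᵥ a + B *ᵥ b) ⬝ᵥ (A⁻¹ *ᵥ (A *ᵥ a + B *ᵥ b))
          + (Bᵀ *ᵥ a - C *ᵥ b) ⬝ᵥ ((C + Bᵀ * A⁻¹ * B)⁻¹ *ᵥ (Bᵀ *ᵥ a - C *ᵥ b)) := by
      rw [hAu, hP0inv, fromBlocks_mulVec]
      simp only [Sum.elim_comp_inl, Sum.elim_comp_inr, sumElim_dotProduct_sumElim]
      simp [zero_mulVec]
    rw [e0, e2]
    exact core A C B hA hC a b _ _ rfl rfl
  · -- j = 1
    have e0 : u ⬝ᵥ ((fromBlocks (A + B * C⁻¹ * Bᵀ) 0 0 C) *ᵥ u)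
        = b ⬝ᵥ (C *ᵥ b) + a ⬝ᵥ ((A + (-Bᵀ)ᵀ * C⁻¹ * (-Bᵀ)) *ᵥ a) := by
      rw [hu, fromBlocks_mulVec]
      simp only [Sum.elim_comp_inl, Sum.elim_comp_inr, sumElim_dotProduct_sumElim]
      simp only [transpose_neg, transpose_transpose, Matrix.neg_mul, Matrix.mul_neg, neg_neg]
      simp [zero_mulVec, add_comm]
    have hv1 : C *ᵥ b + (-Bᵀ) *ᵥ a = -(Bᵀ *ᵥ a - C *ᵥ b) := by
      rw [neg_mulVec]; abel
    have hv2 : (-Bᵀ)ᵀ *ᵥ b - A *ᵥ a = -(A *ᵥ a + B *ᵥ b) := by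
      rw [transpose_neg, transpose_transpose, neg_mulVec]; abel
    have e2 : ((fromBlocks A B Bᵀ (-C)) *ᵥ u) ⬝ᵥ ((fromBlocks (A + B * C⁻¹ * Bᵀ) 0 0 C)⁻¹ *ᵥ ((fromBlocks A B Bᵀ (-C)) *ᵥ u))
        = (C *ᵥ b + (-Bᵀ) *ᵥ a) ⬝ᵥ (C⁻¹ *ᵥ (C *ᵥ b + (-Bᵀ) *ᵥ a))
          + ((-Bᵀ)ᵀ *ᵥ b - A *ᵥ a) ⬝ᵥ ((A + (-Bᵀ)ᵀ * C⁻¹ * (-Bᵀ))⁻¹ *ᵥ ((-Bᵀ)ᵀ *ᵥ b - A *ᵥ a)) := by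
      rw [hAu, hP1inv, fromBlocks_mulVec]
      simp only [Sum.elim_comp_inl, Sum.elim_comp_inr, sumElim_dotProduct_sumElim]
      rw [hv1, hv2]
      simp only [transpose_neg, transpose_transpose, Matrix.neg_mul, Matrix.mul_neg, neg_neg]
      simp only [mulVec_neg, dotProduct_neg, neg_dotProduct, neg_neg, zero_mulVec, add_zero,
        zero_add]
      ring
    rw [e0, e2]
    exact core C A (-Bᵀ) hC hA b a _ _ rfl rfl
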